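/- For a fixed pair (a,d) and fixed coloring color class, the number of 2-colorings of {1,...,N} whose (a,d)-primary k-term semi-progression of scope m is a given progression P equals at most 2^{N - k - w(P)}, where w(P) is the weight of P. -/

import Mathlib

open scoped Classical

/-- For a fixed pair `(a,d)` and a fixed color class, the number of 2-colorings of
`{1,...,N}` (encoded by the set `A` of elements of the fixed color) whose
`(a,d)`-primary `k`-term semi-progression of scope `m` is a given progression
`P = (aseq 0, ..., aseq (k-1))` is at most `2^{N - k - w(P)}`, where
`w(P) = u 0 + ⋯ + u (k-2)` is the weight of `P`. -/
theorem count_colorings_with_primary_semiprog (N m k d a : ℕ) (hm : 1 ≤ m)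
    (hd : 1 ≤ d) (hk : 1 ≤ k) (aseq u : ℕ → ℕ)
    (ha : aseq 0 = a)
    (hrange : ∀ j < k, aseq j ∈ Finset.Icc 1 N)
    (hu : ∀ i, i + 1 < k → u i < m ∧ aseq (i + 1) = aseq i + (u i + 1) * d) :
    ((Finset.Icc 1 N).powerset.filter (fun A : Finset ℕ =>
        (∀ j < k, aseq j ∈ A) ∧
        ∀ b u' : ℕ → ℕ, b 0 = a →
          (∀ i, i + 1 < k → u' i < m ∧ b (i + 1) = b i + (u' i + 1) * d) →
          ((∀ j < k, b j ∈ A) ∨ (∀ j < k, b j ∉ A)) →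
          ¬ ∃ i, i + 1 < k ∧ (∀ j < i, u' j = u j) ∧ u' i < u i)).card ≤
      2 ^ (N - k - ∑ i ∈ Finset.range (k - 1), u i) := by
  classical
  -- one step of the progression
  have hstep : ∀ i, i + 1 < k → aseq i < aseq (i + 1) := by
    intro i hi
    have h2 := (hu i hi).2
    have : 1 ≤ (u i + 1) * d := by
      calc 1 = 1 * 1 := by ring
      _ ≤ (u i + 1) * d := Nat.mul_le_mul (by omega) hd
    omega
  -- strict monotonicity
  have hmono : ∀ j, j < k → ∀ i, i < j → aseq i < aseq j := by
    intro j hj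
    induction j with
    | zero => intro i hi; omega
    | succ n ih =>
      intro i hi
      have h1 : aseq n < aseq (n + 1) := hstep n hj
      rcases Nat.lt_succ_iff_lt_or_eq.mp hi with h | h
      · exact (ih (by omega) i h).trans h1
      · subst h; exact h1
  have hmonole : ∀ j, j < k → ∀ i, i ≤ j → aseq i ≤ aseq j := by
    intro j hj i hi
    rcases Nat.lt_or_ge i j with h | h
    · exact le_of_lt (hmono j hj i h)
    · have : i = j := by omega
      rw [this]
  set F : Finset ℕ := (Finset.range k).image aseq with hF
  set G : Finset ℕ := (Finset.range (k - 1)).biUnion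
      (fun i => (Finset.range (u i)).image (fun v => aseq i + (v + 1) * d)) with hG
  -- bounds for elements of G blocks
  have hGbound : ∀ i, i + 1 < k → ∀ v, v < u i →
      aseq i < aseq i + (v + 1) * d ∧ aseq i + (v + 1) * d < aseq (i + 1) := by
    intro i hi v hv
    have h2 := (hu i hi).2
    have h3 : (v + 1) * d < (u i + 1) * d := by
      apply Nat.mul_lt_mul_of_lt_of_le (by omega) (le_refl d) (by omega)
    have h4 : 1 ≤ (v + 1) * d := by
      calc 1 = 1 * 1 := by ring
      _ ≤ (v + 1) * d := Nat.mul_le_mul (by omega) hd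
    omega
  have hcardF : F.card = k := by
    rw [hF, Finset.card_image_of_injOn, Finset.card_range]
    intro x hx y hy hxy
    simp only [Finset.coe_range, Set.mem_Iio] at hx hy
    by_contra hne
    rcases Nat.lt_or_ge x y with h | h
    · exact absurd hxy (Nat.ne_of_lt (hmono y hy x h))
    · have : y < x := by omega
      exact absurd hxy.symm (Nat.ne_of_lt (hmono x hx y this))
  have hcardG : G.card = ∑ i ∈ Finset.range (k - 1), u i := by
    rw [hG, Finset.card_biUnion]
    · apply Finset.sum_congr rfl
      intro i hi
      rw [Finset.card_image_of_injOn, Finset.card_range]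
      intro x hx y hy hxy
      have hxy' : aseq i + (x + 1) * d = aseq i + (y + 1) * d := hxy
      have h1 : (x + 1) * d = (y + 1) * d := by omega
      have := Nat.eq_of_mul_eq_mul_right (by omega : 0 < d) h1
      omega
    · have key : ∀ i j, i + 1 < k → j + 1 < k → i < j →
          Disjoint ((Finset.range (u i)).image (fun v => aseq i + (v + 1) * d))
            ((Finset.range (u j)).image (fun v => aseq j + (v + 1) * d)) := by
        intro i j hik hjk hij
        rw [Finset.disjoint_left]
        intro x hx hx'
        simp only [Finset.mem_image, Finset.mem_range] at hx hx'
        obtain ⟨v, hv, hveq⟩ := hx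
        obtain ⟨v', hv', heq⟩ := hx'
        have hveq' : aseq i + (v + 1) * d = x := hveq
        have heq' : aseq j + (v' + 1) * d = x := heq
        have hbi := hGbound i hik v hv
        have hbj := hGbound j hjk v' hv'
        have h1 : aseq (i + 1) ≤ aseq j := hmonole j (by omega) (i + 1) hij
        omega
      intro i hi j hj hij
      simp only [Finset.mem_coe, Finset.mem_range] at hi hj
      rcases Nat.lt_or_ge i j with h | h
      · exact key i j (by omega) (by omega) h
      · exact (key j i (by omega) (by omega) (by omega)).symm
  have hFGdisj : Disjoint F G := by
    rw [Finset.disjoint_left]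
    intro x hx hx'
    simp only [hF, Finset.mem_image, Finset.mem_range] at hx
    simp only [hG, Finset.mem_biUnion, Finset.mem_image, Finset.mem_range] at hx'
    obtain ⟨j, hj, hjeq⟩ := hx
    obtain ⟨i, hi, v, hv, heq⟩ := hx'
    have hjeq' : aseq j = x := hjeq
    have heq' : aseq i + (v + 1) * d = x := heq
    have hik : i + 1 < k := by omega
    have hb := hGbound i hik v hv
    rcases Nat.lt_or_ge i j with h | h
    · have : aseq (i + 1) ≤ aseq j := hmonole j hj (i + 1) h
      omega
    · have : aseq j ≤ aseq i := hmonole i (by omega) j h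
      omega
  have hGsub : G ⊆ Finset.Icc 1 N := by
    intro x hx
    simp only [hG, Finset.mem_biUnion, Finset.mem_image, Finset.mem_range] at hx
    obtain ⟨i, hi, v, hv, heq⟩ := hx
    have heq' : aseq i + (v + 1) * d = x := heq
    have hik : i + 1 < k := by omega
    have hb := hGbound i hik v hv
    have h1 := hrange i (by omega)
    have h2 := hrange (i + 1) hik
    simp only [Finset.mem_Icc] at h1 h2 ⊢
    omega
  have hFsub : F ⊆ Finset.Icc 1 N := by
    intro x hx
    simp only [hF, Finset.mem_image, Finset.mem_range] at hx
    obtain ⟨j, hj, hjeq⟩ := hx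
    rw [← hjeq]
    exact hrange j hj
  -- key lemma: for A in the filtered set, G ∩ A = ∅
  have hkey : ∀ A ∈ (Finset.Icc 1 N).powerset.filter (fun A : Finset ℕ =>
        (∀ j < k, aseq j ∈ A) ∧
        ∀ b u' : ℕ → ℕ, b 0 = a →
          (∀ i, i + 1 < k → u' i < m ∧ b (i + 1) = b i + (u' i + 1) * d) →
          ((∀ j < k, b j ∈ A) ∨ (∀ j < k, b j ∉ A)) →
          ¬ ∃ i, i + 1 < k ∧ (∀ j < i, u' j = u j) ∧ u' i < u i),
      ∀ x ∈ G, x ∉ A := by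
    intro A hA x hx hxA
    simp only [Finset.mem_filter, Finset.mem_powerset] at hA
    obtain ⟨hAsub, hmem, hprim⟩ := hA
    simp only [hG, Finset.mem_biUnion, Finset.mem_image, Finset.mem_range] at hx
    obtain ⟨i, hi, v, hv, heq⟩ := hx
    have heq' : aseq i + (v + 1) * d = x := heq
    rw [← heq'] at hxA
    have hik : i + 1 < k := by omega
    set b : ℕ → ℕ := fun j =>
      if j ≤ i then aseq j else if j = i + 1 then aseq i + (v + 1) * d else aseq (j - 1)
      with hb
    set u' : ℕ → ℕ := fun j =>
      if j < i then u j else if j = i then v else if j = i + 1 then u i - v - 1 else u (j - 1)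
      with hu'
    -- pointwise values
    have hbA : ∀ j, j ≤ i → b j = aseq j := by
      intro j hj
      show (if j ≤ i then aseq j else if j = i + 1 then aseq i + (v + 1) * d
        else aseq (j - 1)) = aseq j
      rw [if_pos hj]
    have hbB : b (i + 1) = aseq i + (v + 1) * d := by
      show (if i + 1 ≤ i then aseq (i + 1) else if i + 1 = i + 1 then aseq i + (v + 1) * d
        else aseq (i + 1 - 1)) = aseq i + (v + 1) * d
      rw [if_neg (by omega : ¬ i + 1 ≤ i), if_pos rfl]
    have hbC : ∀ j, i + 1 < j → b j = aseq (j - 1) := by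
      intro j hj
      show (if j ≤ i then aseq j else if j = i + 1 then aseq i + (v + 1) * d
        else aseq (j - 1)) = aseq (j - 1)
      rw [if_neg (by omega : ¬ j ≤ i), if_neg (by omega : ¬ j = i + 1)]
    have huA : ∀ j, j < i → u' j = u j := by
      intro j hj
      show (if j < i then u j else if j = i then v else if j = i + 1 then u i - v - 1
        else u (j - 1)) = u j
      rw [if_pos hj]
    have huB : u' i = v := by
      show (if i < i then u i else if i = i then v else if i = i + 1 then u i - v - 1
        else u (i - 1)) = v
      rw [if_neg (lt_irrefl i), if_pos rfl]
    have huC : u' (i + 1) = u i - v - 1 := by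
      show (if i + 1 < i then u (i + 1) else if i + 1 = i then v
        else if i + 1 = i + 1 then u i - v - 1 else u (i + 1 - 1)) = u i - v - 1
      rw [if_neg (by omega : ¬ i + 1 < i), if_neg (by omega : ¬ i + 1 = i), if_pos rfl]
    have huD : ∀ j, i + 1 < j → u' j = u (j - 1) := by
      intro j hj
      show (if j < i then u j else if j = i then v else if j = i + 1 then u i - v - 1
        else u (j - 1)) = u (j - 1)
      rw [if_neg (by omega : ¬ j < i), if_neg (by omega : ¬ j = i),
        if_neg (by omega : ¬ j = i + 1)]
    apply hprim b u'
    · rw [hbA 0 (Nat.zero_le i)]; exact ha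
    · intro j hj
      rcases Nat.lt_trichotomy j i with h | h | h
      · obtain ⟨hm1, he1⟩ := hu j (by omega)
        rw [hbA j (le_of_lt h), hbA (j + 1) (by omega), huA j h]
        exact ⟨hm1, he1⟩
      · subst h
        rw [hbA j (le_refl j), hbB, huB]
        exact ⟨by have := (hu j hik).1; omega, rfl⟩
      · rcases Nat.eq_or_lt_of_le h with h' | h'
        · -- j = i + 1
          have hji : j = i + 1 := h'.symm
          subst hji
          obtain ⟨hm1, he1⟩ := hu i hik
          have hb2 : b (i + 1 + 1) = aseq (i + 1) := by
            rw [hbC (i + 1 + 1) (by omega)]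
            norm_num
          rw [hb2, hbB, huC]
          refine ⟨by omega, ?_⟩
          have hmul : (v + 1) * d + (u i - v - 1 + 1) * d = (u i + 1) * d := by
            rw [← Nat.add_mul]
            congr 1
            omega
          omega
        · -- j ≥ i + 2
          have hj2 : i + 2 ≤ j := h'
          obtain ⟨hm1, he1⟩ := hu (j - 1) (by omega)
          have hjm1 : j - 1 + 1 = j := by omega
          rw [hjm1] at he1
          have hb2 : b (j + 1) = aseq j := by
            rw [hbC (j + 1) (by omega)]
            norm_num
          rw [hb2, hbC j (by omega), huD j (by omega)]
          exact ⟨hm1, he1⟩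
    · left
      intro j hj
      rcases Nat.lt_or_ge i j with h | h
      · rcases Nat.eq_or_lt_of_le h with h' | h'
        · rw [← h', hbB]
          exact hxA
        · rw [hbC j h']
          exact hmem (j - 1) (by omega)
      · rw [hbA j h]
        exact hmem j (by omega)
    · refine ⟨i, hik, fun j hj => huA j hj, ?_⟩
      rw [huB]
      exact hv
  -- counting via injection A ↦ A \ F
  have hinj : ((Finset.Icc 1 N).powerset.filter (fun A : Finset ℕ =>
        (∀ j < k, aseq j ∈ A) ∧
        ∀ b u' : ℕ → ℕ, b 0 = a →
          (∀ i, i + 1 < k → u' i < m ∧ b (i + 1) = b i + (u' i + 1) * d) →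
          ((∀ j < k, b j ∈ A) ∨ (∀ j < k, b j ∉ A)) →
          ¬ ∃ i, i + 1 < k ∧ (∀ j < i, u' j = u j) ∧ u' i < u i)).card ≤
      ((Finset.Icc 1 N \ (F ∪ G)).powerset).card := by
    apply Finset.card_le_card_of_injOn (fun A => A \ F)
    · intro A hA
      have hkA := hkey A hA
      simp only [Finset.mem_coe, Finset.mem_filter, Finset.mem_powerset] at hA ⊢
      intro x hx
      simp only [Finset.mem_sdiff] at hx ⊢
      refine ⟨hA.1 hx.1, ?_⟩
      simp only [Finset.mem_union]
      rintro (h | h)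
      · exact hx.2 h
      · exact hkA x h hx.1
    · intro A hA A' hA' heq
      simp only [Finset.mem_coe, Finset.mem_filter, Finset.mem_powerset] at hA hA'
      have heq' : A \ F = A' \ F := heq
      have hFA : F ⊆ A := by
        intro x hx
        simp only [hF, Finset.mem_image, Finset.mem_range] at hx
        obtain ⟨j, hj, hjeq⟩ := hx
        rw [← hjeq]
        exact hA.2.1 j hj
      have hFA' : F ⊆ A' := by
        intro x hx
        simp only [hF, Finset.mem_image, Finset.mem_range] at hx
        obtain ⟨j, hj, hjeq⟩ := hx
        rw [← hjeq]
        exact hA'.2.1 j hj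
      have h2 : A \ F ∪ F = A' \ F ∪ F := by rw [heq']
      rwa [Finset.sdiff_union_of_subset hFA, Finset.sdiff_union_of_subset hFA'] at h2
  refine hinj.trans ?_
  rw [Finset.card_powerset]
  apply Nat.pow_le_pow_right (by norm_num)
  rw [Finset.card_sdiff_of_subset (Finset.union_subset hFsub hGsub),
    Finset.card_union_of_disjoint hFGdisj, hcardF, hcardG, Nat.card_Icc]
  rw [Nat.add_sub_cancel, ← Nat.sub_sub]
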